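/- Let G = (V, ω) be a finite weighted graph with vertex measure μ, let h, f : V → ℝ with f_i > 0 for all i, and let α ≥ p > 1. Let φ : V → ℝ with φ_i > 0 for all i, and let ϕ : V → ℝ be arbitrary. Then the function t ↦ I(φ + tϕ) is differentiable at t = 0 and d/dt|_{t=0} I(φ + tϕ) = −p (∫_V f φ^α dμ)^{−p/α} ∫_V (Δ_p φ + h φ^{p−1} − λ_φ f φ^{α−1}) ϕ dμ, where λ_φ = −(∫_E |∇φ|^p dω − ∫_V h φ^p dμ)/(∫_V f φ^α dμ). -/

import Mathlib

open Real Filter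

private lemma hAff (c d : ℝ) : HasDerivAt (fun t : ℝ => c + t * d) d 0 := by
  simpa using ((hasDerivAt_id (0:ℝ)).mul_const d).const_add c

private lemma rpow_aff_deriv {c : ℝ} (hc : 0 < c) (d q : ℝ) :
    HasDerivAt (fun t : ℝ => (c + t * d) ^ q) (q * c ^ (q - 1) * d) 0 := by
  have h2 : HasDerivAt (fun y : ℝ => y ^ q) (q * (c + 0 * d) ^ (q - 1)) (c + 0 * d) :=
    Real.hasDerivAt_rpow_const (Or.inl (by simpa using hc.ne'))
  have := h2.comp 0 (hAff c d)
  simpa [Function.comp_def, mul_assoc] using this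

private lemma abs_rpow_aff_deriv {q : ℝ} (hq : 1 < q) (c d : ℝ) :
    HasDerivAt (fun t : ℝ => |c + t * d| ^ q) (q * |c| ^ (q - 2) * c * d) 0 := by
  have h2 := hasDerivAt_abs_rpow (c + 0 * d) hq
  have := h2.comp 0 (hAff c d)
  simpa [Function.comp_def, mul_assoc] using this


/-- The gradient energy `∫_E |∇φ|^p dω = (1/2) ∑_{i,j} ω_ij |φ_j − φ_i|^p`. -/
noncomputable def gradEnergy {V : Type*} [Fintype V] (ω : V → V → ℝ) (p : ℝ)
    (φ : V → ℝ) : ℝ :=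
  (1 / 2) * ∑ i, ∑ j, ω i j * |φ j - φ i| ^ p

/-- The energy functional
`I(φ) = (∫_E |∇φ|^p dω − ∫_V h φ^p dμ) (∫_V f φ^α dμ)^{−p/α}`. -/
noncomputable def energy {V : Type*} [Fintype V] (μ : V → ℝ) (ω : V → V → ℝ)
    (h f : V → ℝ) (p α : ℝ) (φ : V → ℝ) : ℝ :=
  (gradEnergy ω p φ - ∑ i, μ i * (h i * φ i ^ p)) *
    (∑ i, μ i * (f i * φ i ^ α)) ^ (-(p / α))

/-- The discrete `p`-Laplacian on a finite weighted graph: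
`(Δ_p φ)_i = (1/μ_i) ∑_j ω_ij |φ_j − φ_i|^{p−2} (φ_j − φ_i)`. -/
noncomputable def pLaplacian {V : Type*} [Fintype V] (μ : V → ℝ) (ω : V → V → ℝ)
    (p : ℝ) (φ : V → ℝ) (i : V) : ℝ :=
  (1 / μ i) * ∑ j, ω i j * |φ j - φ i| ^ (p - 2) * (φ j - φ i)

/-- **Euler–Lagrange equation of the energy functional**: for `φ > 0` and any
direction `ϕ`, `t ↦ I(φ + tϕ)` is differentiable at `t = 0` with derivative
`−p (∫_V f φ^α dμ)^{−p/α} ∫_V (Δ_p φ + h φ^{p−1} − λ_φ f φ^{α−1}) ϕ dμ`,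
where `λ_φ = −(∫_E |∇φ|^p dω − ∫_V h φ^p dμ) / ∫_V f φ^α dμ`. -/
theorem energy_euler_lagrange_derivative
    {V : Type*} [Fintype V] [Nonempty V]
    (μ : V → ℝ) (hμ : ∀ i, 0 < μ i)
    (ω : V → V → ℝ) (hωsym : ∀ i j, ω i j = ω j i)
    (hωnonneg : ∀ i j, 0 ≤ ω i j) (hωloop : ∀ i, ω i i = 0)
    (h f : V → ℝ) (hf : ∀ i, 0 < f i)
    (p α : ℝ) (hp : 1 < p) (hpα : p ≤ α)
    (φ : V → ℝ) (hφpos : ∀ i, 0 < φ i) (ϕ : V → ℝ)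
    (lamφ : ℝ)
    (hlam : lamφ = -(gradEnergy ω p φ - ∑ i, μ i * (h i * φ i ^ p)) /
      (∑ i, μ i * (f i * φ i ^ α))) :
    HasDerivAt (fun t : ℝ => energy μ ω h f p α (fun i => φ i + t * ϕ i))
      (-p * (∑ i, μ i * (f i * φ i ^ α)) ^ (-(p / α)) *
        ∑ i, μ i * ((pLaplacian μ ω p φ i + h i * φ i ^ (p - 1) -
          lamφ * f i * φ i ^ (α - 1)) * ϕ i)) 0 := by
  have hα : (0:ℝ) < α := by linarith
  have hC0pos : 0 < ∑ i, μ i * (f i * φ i ^ α) := by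
    apply Finset.sum_pos _ Finset.univ_nonempty
    intro i _
    have h1 := hμ i; have h2 := hf i; have h3 := hφpos i
    positivity
  -- derivative of the gradient energy part
  have hA : HasDerivAt (fun t : ℝ => gradEnergy ω p (fun i => φ i + t * ϕ i))
      ((1/2) * ∑ i, ∑ j, ω i j * (p * |φ j - φ i| ^ (p - 2) * (φ j - φ i) * (ϕ j - ϕ i))) 0 := by
    unfold gradEnergy
    apply HasDerivAt.const_mul
    apply HasDerivAt.fun_sum
    intro i _
    apply HasDerivAt.fun_sum
    intro j _
    apply HasDerivAt.const_mul
    have heq : (fun t : ℝ => |(φ j + t * ϕ j) - (φ i + t * ϕ i)| ^ p)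
        = fun t : ℝ => |(φ j - φ i) + t * (ϕ j - ϕ i)| ^ p := by
      funext t; congr 1; ring
    rw [heq]
    exact abs_rpow_aff_deriv hp (φ j - φ i) (ϕ j - ϕ i)
  -- derivative of the h part
  have hB : HasDerivAt (fun t : ℝ => ∑ i, μ i * (h i * (φ i + t * ϕ i) ^ p))
      (∑ i, μ i * (h i * (p * φ i ^ (p - 1) * ϕ i))) 0 := by
    apply HasDerivAt.fun_sum
    intro i _
    exact (((rpow_aff_deriv (hφpos i) (ϕ i) p).const_mul (h i)).const_mul (μ i)).congr_deriv
      (by ring)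
  -- derivative of the f part
  have hC : HasDerivAt (fun t : ℝ => ∑ i, μ i * (f i * (φ i + t * ϕ i) ^ α))
      (∑ i, μ i * (f i * (α * φ i ^ (α - 1) * ϕ i))) 0 := by
    apply HasDerivAt.fun_sum
    intro i _
    exact (((rpow_aff_deriv (hφpos i) (ϕ i) α).const_mul (f i)).const_mul (μ i)).congr_deriv
      (by ring)
  have hC0' : (∑ i, μ i * (f i * (φ i + 0 * ϕ i) ^ α)) = ∑ i, μ i * (f i * φ i ^ α) := by
    simp
  have hCpow : HasDerivAt (fun t : ℝ => (∑ i, μ i * (f i * (φ i + t * ϕ i) ^ α)) ^ (-(p/α)))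
      ((-(p/α)) * (∑ i, μ i * (f i * φ i ^ α)) ^ (-(p/α) - 1) *
        (∑ i, μ i * (f i * (α * φ i ^ (α - 1) * ϕ i)))) 0 := by
    have := hC.rpow_const (p := -(p/α)) (Or.inl (by rw [hC0']; exact hC0pos.ne'))
    rw [hC0'] at this
    exact this.congr_deriv (by ring)
  have hE := (hA.fun_sub hB).fun_mul hCpow
  unfold energy
  convert hE using 1
  · rfl
  · rfl
  · simp only [zero_mul, add_zero]
    have h1 : ∑ i : V, ∑ j : V, ω i j * (p * |φ j - φ i| ^ (p - 2) * (φ j - φ i) * (ϕ j - ϕ i))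
        = (∑ i : V, ∑ j : V, ω i j * (p * |φ j - φ i| ^ (p - 2) * (φ j - φ i) * ϕ j))
          - ∑ i : V, ∑ j : V, ω i j * (p * |φ j - φ i| ^ (p - 2) * (φ j - φ i) * ϕ i) := by
      rw [← Finset.sum_sub_distrib]
      refine Finset.sum_congr rfl fun i _ => ?_
      rw [← Finset.sum_sub_distrib]
      exact Finset.sum_congr rfl fun j _ => by ring
    have h2 : (∑ i : V, ∑ j : V, ω i j * (p * |φ j - φ i| ^ (p - 2) * (φ j - φ i) * ϕ j))
        = - ∑ i : V, ∑ j : V, ω i j * (p * |φ j - φ i| ^ (p - 2) * (φ j - φ i) * ϕ i) := by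
      rw [Finset.sum_comm, ← Finset.sum_neg_distrib]
      refine Finset.sum_congr rfl fun i _ => ?_
      rw [← Finset.sum_neg_distrib]
      refine Finset.sum_congr rfl fun j _ => ?_
      rw [hωsym j i, abs_sub_comm (φ i) (φ j)]
      ring
    have h3 : ∑ i : V, ∑ j : V, ω i j * (p * |φ j - φ i| ^ (p - 2) * (φ j - φ i) * ϕ i)
        = p * ∑ i : V, ∑ j : V, ω i j * (|φ j - φ i| ^ (p - 2) * (φ j - φ i) * ϕ i) := by
      rw [Finset.mul_sum]
      refine Finset.sum_congr rfl fun i _ => ?_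
      rw [Finset.mul_sum]
      exact Finset.sum_congr rfl fun j _ => by ring
    have hPL : ∑ i : V, μ i * ((pLaplacian μ ω p φ i + h i * φ i ^ (p - 1) -
          lamφ * f i * φ i ^ (α - 1)) * ϕ i)
        = (∑ i : V, ∑ j : V, ω i j * (|φ j - φ i| ^ (p - 2) * (φ j - φ i) * ϕ i))
          + ((∑ i : V, μ i * (h i * φ i ^ (p - 1) * ϕ i))
            - lamφ * ∑ i : V, μ i * (f i * φ i ^ (α - 1) * ϕ i)) := by
      have key : ∀ i : V, μ i * ((pLaplacian μ ω p φ i + h i * φ i ^ (p - 1) -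
            lamφ * f i * φ i ^ (α - 1)) * ϕ i)
          = (∑ j : V, ω i j * (|φ j - φ i| ^ (p - 2) * (φ j - φ i) * ϕ i))
            + (μ i * (h i * φ i ^ (p - 1) * ϕ i)
              - lamφ * (μ i * (f i * φ i ^ (α - 1) * ϕ i))) := by
        intro i
        unfold pLaplacian
        have hsm : (∑ j : V, ω i j * (|φ j - φ i| ^ (p - 2) * (φ j - φ i) * ϕ i))
            = (∑ j : V, ω i j * |φ j - φ i| ^ (p - 2) * (φ j - φ i)) * ϕ i := by
          rw [Finset.sum_mul]
          exact Finset.sum_congr rfl fun j _ => by ring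
        rw [hsm]
        have hμi : μ i ≠ 0 := (hμ i).ne'
        field_simp
        ring
      rw [Finset.sum_congr rfl fun i _ => key i, Finset.sum_add_distrib,
        Finset.sum_sub_distrib, ← Finset.mul_sum]
    have hBsum : ∑ i : V, μ i * (h i * (p * φ i ^ (p - 1) * ϕ i))
        = p * ∑ i : V, μ i * (h i * φ i ^ (p - 1) * ϕ i) := by
      rw [Finset.mul_sum]
      exact Finset.sum_congr rfl fun i _ => by ring
    have hCsum : ∑ i : V, μ i * (f i * (α * φ i ^ (α - 1) * ϕ i))
        = α * ∑ i : V, μ i * (f i * φ i ^ (α - 1) * ϕ i) := by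
      rw [Finset.mul_sum]
      exact Finset.sum_congr rfl fun i _ => by ring
    have hy : (∑ i : V, μ i * (f i * φ i ^ α)) ^ (-(p / α) - 1)
        = (∑ i : V, μ i * (f i * φ i ^ α)) ^ (-(p / α)) / ∑ i : V, μ i * (f i * φ i ^ α) := by
      rw [Real.rpow_sub hC0pos, Real.rpow_one]
    rw [hPL, h1, h2, h3, hBsum, hCsum, hy, hlam]
    field_simp
    ring
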